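/- A graph is an interval graph if and only if its maximal cliques can be linearly ordered X_1, ..., X_s such that for every vertex v, the set of indices i with v ∈ X_i is an interval of consecutive integers. -/

import Mathlib

/-- An interval graph: an intersection graph of closed real intervals. -/
def IsIntervalGraph {V : Type*} (G : SimpleGraph V) : Prop :=
  ∃ a b : V → ℝ, (∀ v, a v ≤ b v) ∧
    (∀ u v, G.Adj u v ↔ u ≠ v ∧ a u ≤ b v ∧ a v ≤ b u)

/-- A maximal clique of `G`. -/
def IsMaxClique {V : Type*} (G : SimpleGraph V) (s : Set V) : Prop :=
  G.IsClique s ∧ ∀ t : Set V, G.IsClique t → s ⊆ t → s = t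

open Classical in
lemma exists_maxClique_superset {V : Type*} [Fintype V] (G : SimpleGraph V)
    (c : Set V) (hc : G.IsClique c) : ∃ m, IsMaxClique G m ∧ c ⊆ m := by
  have hfin : {t : Set V | G.IsClique t ∧ c ⊆ t}.Finite := Set.toFinite _
  obtain ⟨m, hm, hmax⟩ := hfin.exists_maximalFor id _ ⟨c, hc, subset_rfl⟩
  exact ⟨m, ⟨hm.1, fun t ht hsub => hsub.antisymm (hmax ⟨ht, hm.2.trans hsub⟩ hsub)⟩, hm.2⟩

open Classical in
/-- Gilmore–Hoffman: a graph is an interval graph iff its maximal cliques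
can be linearly ordered so that the cliques containing any given vertex are consecutive. -/
theorem intervalGraph_iff_consecutive_maxClique_order {V : Type*} [Fintype V]
    (G : SimpleGraph V) :
    IsIntervalGraph G ↔
      ∃ (s : ℕ) (X : Fin s → Set V),
        Function.Injective X ∧
        (∀ i, IsMaxClique G (X i)) ∧
        (∀ c : Set V, IsMaxClique G c → ∃ i, X i = c) ∧
        (∀ (v : V) (i j k : Fin s), i ≤ j → j ≤ k → v ∈ X i → v ∈ X k → v ∈ X j) := by
  constructor
  · rintro ⟨a, b, hab, hadj⟩
    set p : Set V → ℝ := fun c => sSup (a '' c) with hp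
    have hmem : ∀ c : Set V, G.IsClique c → ∀ v ∈ c, a v ≤ p c ∧ p c ≤ b v := by
      intro c hc v hv
      have hub : b v ∈ upperBounds (a '' c) := by
        rintro x ⟨u, hu, rfl⟩
        by_cases huv : u = v
        · subst huv; exact hab u
        · exact ((hadj u v).mp (hc hu hv huv)).2.1
      exact ⟨le_csSup ⟨b v, hub⟩ ⟨v, hv, rfl⟩, csSup_le ⟨a v, v, hv, rfl⟩ hub⟩
    have hext : ∀ (c : Set V), G.IsClique c → ∀ v, a v ≤ p c → p c ≤ b v →
        G.IsClique (c ∪ {v}) := by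
      intro c hc v h1 h2 x hx y hy hxy
      have key : ∀ z ∈ c ∪ ({v} : Set V), a z ≤ p c ∧ p c ≤ b z := by
        rintro z (hz | hz)
        · exact hmem c hc z hz
        · rw [Set.mem_singleton_iff] at hz; subst hz; exact ⟨h1, h2⟩
      exact (hadj x y).mpr ⟨hxy, le_trans (key x hx).1 (key y hy).2,
        le_trans (key y hy).1 (key x hx).2⟩
    have hinj : ∀ c d : Set V, IsMaxClique G c → IsMaxClique G d → p c = p d → c = d := by
      intro c d hc hd h
      have hcd : G.IsClique (c ∪ d) := by
        intro x hx y hy hxy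
        have key : ∀ z ∈ c ∪ d, a z ≤ p c ∧ p c ≤ b z := by
          rintro z (hz | hz)
          · exact hmem c hc.1 z hz
          · rw [h]; exact hmem d hd.1 z hz
        exact (hadj x y).mpr ⟨hxy, le_trans (key x hx).1 (key y hy).2,
          le_trans (key y hy).1 (key x hx).2⟩
      have h1 := hc.2 _ hcd Set.subset_union_left
      have h2 := hd.2 _ hcd Set.subset_union_right
      exact h1.trans h2.symm
    have hfin : {c : Set V | IsMaxClique G c}.Finite := Set.toFinite _
    set T : Finset ℝ := Finset.image p hfin.toFinset with hT
    set n := T.card with hn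
    let f := T.orderIsoOfFin hn.symm
    have hC : ∀ i : Fin n, ∃ c : Set V, IsMaxClique G c ∧ p c = (f i : ℝ) := by
      intro i
      obtain ⟨c, hc, hpc⟩ := Finset.mem_image.mp (f i).2
      exact ⟨c, hfin.mem_toFinset.mp hc, hpc⟩
    choose C hC1 hC2 using hC
    refine ⟨n, C, ?_, hC1, ?_, ?_⟩
    · intro i j h
      apply f.injective
      apply Subtype.ext
      rw [← hC2 i, ← hC2 j, h]
    · intro c hc
      have : p c ∈ T := Finset.mem_image_of_mem p (hfin.mem_toFinset.mpr hc)
      obtain ⟨i, hi⟩ := f.surjective ⟨p c, this⟩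
      refine ⟨i, hinj _ _ (hC1 i) hc ?_⟩
      rw [hC2 i, hi]
    · intro v i j k hij hjk hvi hvk
      have hle1 : (f i : ℝ) ≤ (f j : ℝ) := f.monotone hij
      have hle2 : (f j : ℝ) ≤ (f k : ℝ) := f.monotone hjk
      have h1 : a v ≤ p (C j) := by
        rw [hC2 j]; exact le_trans ((hC2 i) ▸ (hmem _ (hC1 i).1 v hvi).1) hle1
      have h2 : p (C j) ≤ b v := by
        rw [hC2 j]; exact le_trans hle2 ((hC2 k) ▸ (hmem _ (hC1 k).1 v hvk).2)
      have hcl := hext _ (hC1 j).1 v h1 h2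
      have heq := (hC1 j).2 _ hcl Set.subset_union_left
      rw [heq]
      exact Or.inr rfl
  · rintro ⟨s, X, hXinj, hXmax, hXsurj, hcons⟩
    set S : V → Finset (Fin s) := fun v => Finset.univ.filter (fun i => v ∈ X i) with hS
    have hSne : ∀ v, (S v).Nonempty := by
      intro v
      obtain ⟨m, hm, hsub⟩ := exists_maxClique_superset G {v} (G.isClique_singleton v)
      obtain ⟨i, hi⟩ := hXsurj m hm
      exact ⟨i, by simp [hS, hi ▸ hsub rfl]⟩
    have hmemS : ∀ v i, i ∈ S v ↔ v ∈ X i := by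
      intro v i; simp [hS]
    have hminmax : ∀ v, (S v).min' (hSne v) ≤ (S v).max' (hSne v) :=
      fun v => (S v).min'_le _ ((S v).max'_mem (hSne v))
    refine ⟨fun v => (((S v).min' (hSne v) : Fin s) : ℕ),
            fun v => (((S v).max' (hSne v) : Fin s) : ℕ), ?_, ?_⟩
    · intro v
      show ((((S v).min' (hSne v) : Fin s) : ℕ) : ℝ) ≤ (((S v).max' (hSne v) : Fin s) : ℕ)
      exact_mod_cast Fin.le_def.mp (hminmax v)
    · intro u v
      constructor
      · intro h
        have hne := h.ne
        have hcl : G.IsClique {u, v} := SimpleGraph.isClique_pair.mpr (fun _ => h)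
        obtain ⟨m, hm, hsub⟩ := exists_maxClique_superset G {u, v} hcl
        obtain ⟨i, hi⟩ := hXsurj m hm
        have hiu : i ∈ S u := (hmemS u i).mpr (hi ▸ hsub (Or.inl rfl))
        have hiv : i ∈ S v := (hmemS v i).mpr (hi ▸ hsub (Or.inr rfl))
        refine ⟨hne, ?_, ?_⟩
        · show ((((S u).min' (hSne u) : Fin s) : ℕ) : ℝ) ≤ (((S v).max' (hSne v) : Fin s) : ℕ)
          exact_mod_cast Fin.le_def.mp (le_trans ((S u).min'_le i hiu) ((S v).le_max' i hiv))
        · show ((((S v).min' (hSne v) : Fin s) : ℕ) : ℝ) ≤ (((S u).max' (hSne u) : Fin s) : ℕ)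
          exact_mod_cast Fin.le_def.mp (le_trans ((S v).min'_le i hiv) ((S u).le_max' i hiu))
      · rintro ⟨hne, h1, h2⟩
        have h1b : ((((S u).min' (hSne u) : Fin s) : ℕ) : ℝ) ≤ (((S v).max' (hSne v) : Fin s) : ℕ) := h1
        have h2b : ((((S v).min' (hSne v) : Fin s) : ℕ) : ℝ) ≤ (((S u).max' (hSne u) : Fin s) : ℕ) := h2
        have h1' : (S u).min' (hSne u) ≤ (S v).max' (hSne v) := by
          rw [Fin.le_def]; exact_mod_cast h1b
        have h2' : (S v).min' (hSne v) ≤ (S u).max' (hSne u) := by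
          rw [Fin.le_def]; exact_mod_cast h2b
        set j := max ((S u).min' (hSne u)) ((S v).min' (hSne v)) with hj
        have hju : u ∈ X j :=
          hcons u _ j _ (le_max_left _ _) (max_le (hminmax u) h2')
            ((hmemS u _).mp ((S u).min'_mem (hSne u)))
            ((hmemS u _).mp ((S u).max'_mem (hSne u)))
        have hjv : v ∈ X j :=
          hcons v _ j _ (le_max_right _ _) (max_le h1' (hminmax v))
            ((hmemS v _).mp ((S v).min'_mem (hSne v)))
            ((hmemS v _).mp ((S v).max'_mem (hSne v)))
        exact (hXmax j).1 hju hjv hne
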